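/- Let p be a prime number and let Z be the integral closure of ℤ_p (the p-adic integers) in an algebraic closure of ℚ_p. Then: (i) Z has nonzero non-units that are not divisible by any prime element of Z (in fact Z has no prime elements at all); and (ii) Z satisfies the coprime Schinzel Hypothesis CopSch(1,1): for any ℓ ≥ 2 nonzero polynomials P_1(t),…,P_ℓ(t) ∈ Z[t], coprime over the fraction field of Z, such that no non-unit of Z divides all values P_i(m) (m ∈ Z, i = 1,…,ℓ), there exists m ∈ Z such that P_1(m),…,P_ℓ(m) are coprime in Z. -/

import Mathlib

noncomputable instance algebraPadicIntAlgClosure (p : ℕ) [Fact p.Prime] :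
    Algebra ℤ_[p] (AlgebraicClosure ℚ_[p]) :=
  ((algebraMap ℚ_[p] (AlgebraicClosure ℚ_[p])).comp
    (algebraMap ℤ_[p] ℚ_[p])).toAlgebra

/-- The integral closure of `ℤ_p` in an algebraic closure of `ℚ_p`. -/
noncomputable def PadicIntBar (p : ℕ) [Fact p.Prime] : Type _ :=
  integralClosure ℤ_[p] (AlgebraicClosure ℚ_[p])

noncomputable instance (p : ℕ) [Fact p.Prime] : CommRing (PadicIntBar p) :=
  inferInstanceAs (CommRing (integralClosure ℤ_[p] (AlgebraicClosure ℚ_[p])))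

open Polynomial

variable {p : ℕ} [Fact p.Prime]

local notation "K" => AlgebraicClosure ℚ_[p]

private lemma coeff_sum_C_mul_X_pow {R : Type*} [Semiring R] (a : ℕ → R) (m j : ℕ) :
    (∑ i ∈ Finset.range m, C (a i) * X ^ i).coeff j = if j < m then a j else 0 := by
  rw [finset_sum_coeff]
  simp only [coeff_C_mul, coeff_X_pow, mul_ite, mul_one, mul_zero]
  rw [Finset.sum_ite_eq (Finset.range m) j a]
  simp [Finset.mem_range]

theorem padic_hensel_factorization
    (F G0 H0 U W Δ0 : Polynomial ℤ_[p]) (n d : ℕ) (hdn : d ≤ n)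
    (hFn : F.natDegree ≤ n)
    (hG0m : G0.Monic) (hG0d : G0.natDegree = d) (hH0 : H0.natDegree ≤ n - d)
    (hbez : U * G0 + W * H0 = 1)
    (hΔ0 : Δ0.natDegree ≤ n)
    (happ : F - G0 * H0 = C (p : ℤ_[p]) * Δ0) :
    ∃ G H : Polynomial ℤ_[p], F = G * H ∧ G.Monic ∧ G.natDegree = d := by
  set π : ℤ_[p] := (p : ℤ_[p]) with hπdef
  have hπ : π ≠ 0 := Nat.cast_ne_zero.mpr (Fact.out : p.Prime).ne_zero
  -- the inductive step
  have step : ∀ (k : ℕ) (G H Δ : Polynomial ℤ_[p]), G.Monic → G.natDegree = d →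
      H.natDegree ≤ n - d → Δ.natDegree ≤ n → (F - G * H = (C π) ^ (k+1) * Δ) →
      (C π ∣ G - G0) → (C π ∣ H - H0) →
      ∃ G' H' Δ' : Polynomial ℤ_[p],
        (G'.Monic ∧ G'.natDegree = d ∧ H'.natDegree ≤ n - d ∧ Δ'.natDegree ≤ n ∧
         (F - G' * H' = (C π) ^ (k+2) * Δ') ∧ (C π ∣ G' - G0) ∧ (C π ∣ H' - H0)) ∧
        (C π) ^ (k+1) ∣ G' - G ∧ (C π) ^ (k+1) ∣ H' - H := by
    intro k G H Δ hGm hGd hH hΔ hFGH hGG0 hHH0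
    obtain ⟨g₁, hg₁⟩ := hGG0
    obtain ⟨h₁, hh₁⟩ := hHH0
    set A : Polynomial ℤ_[p] := (W * Δ) %ₘ G0 with hAdef
    set Q : Polynomial ℤ_[p] := (W * Δ) /ₘ G0 with hQdef
    have hmoddiv : A + G0 * Q = W * Δ := modByMonic_add_div (W * Δ) G0
    set B : Polynomial ℤ_[p] := U * Δ + Q * H0 with hBdef
    have hBG0 : B * G0 = Δ - A * H0 := by linear_combination Δ * hbez + H0 * hmoddiv
    have hG0ne : G0 ≠ 0 := hG0m.ne_zero
    have hG0deg : G0.degree = (d : WithBot ℕ) := by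
      rw [degree_eq_natDegree hG0ne, hG0d]
    have hAlt : A.degree < (d : WithBot ℕ) := hG0deg ▸ degree_modByMonic_lt (W * Δ) hG0m
    have hAcoeffd : A.coeff d = 0 := coeff_eq_zero_of_degree_lt hAlt
    have hAd : A.natDegree ≤ d := natDegree_le_iff_degree_le.2 hAlt.le
    have hAH0 : (A * H0).natDegree ≤ n := by
      calc (A * H0).natDegree ≤ A.natDegree + H0.natDegree := natDegree_mul_le
        _ ≤ d + (n - d) := add_le_add hAd hH0
        _ = n := by omega
    have hBd : B.natDegree ≤ n - d := by
      by_cases hB0 : B = 0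
      · simp [hB0]
      · have h1 : (B * G0).natDegree = B.natDegree + d := by
          rw [natDegree_mul hB0 hG0ne, hG0d]
        have h2 : (B * G0).natDegree ≤ n := by
          rw [hBG0]
          refine le_trans (natDegree_sub_le _ _) ?_
          exact max_le hΔ hAH0
        omega
    refine ⟨G + (C π) ^ (k+1) * A, H + (C π) ^ (k+1) * B,
      -(A * h₁) - B * g₁ - (C π) ^ k * (A * B), ⟨?_, ?_, ?_, ?_, ?_, ?_, ?_⟩,
      ⟨A, by ring⟩, ⟨B, by ring⟩⟩
    · -- Monic
      have hcd : (G + (C π) ^ (k+1) * A).coeff d = 1 := by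
        rw [coeff_add, ← C_pow, coeff_C_mul, hAcoeffd, mul_zero, add_zero]
        have := hGm.coeff_natDegree
        rwa [hGd] at this
      have hdeg : (G + (C π) ^ (k+1) * A).natDegree ≤ d := by
        refine le_trans (natDegree_add_le _ _) (max_le (le_of_eq hGd) ?_)
        refine le_trans natDegree_mul_le ?_
        rw [← C_pow, natDegree_C, zero_add]
        exact hAd
      exact monic_of_natDegree_le_of_coeff_eq_one d hdeg hcd
    · -- natDegree = d
      have hcd : (G + (C π) ^ (k+1) * A).coeff d = 1 := by
        rw [coeff_add, ← C_pow, coeff_C_mul, hAcoeffd, mul_zero, add_zero]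
        have := hGm.coeff_natDegree
        rwa [hGd] at this
      have hdeg : (G + (C π) ^ (k+1) * A).natDegree ≤ d := by
        refine le_trans (natDegree_add_le _ _) (max_le (le_of_eq hGd) ?_)
        refine le_trans natDegree_mul_le ?_
        rw [← C_pow, natDegree_C, zero_add]
        exact hAd
      exact le_antisymm hdeg (le_natDegree_of_ne_zero (by rw [hcd]; exact one_ne_zero))
    · -- H' degree
      refine le_trans (natDegree_add_le _ _) (max_le hH ?_)
      refine le_trans natDegree_mul_le ?_
      rw [← C_pow, natDegree_C, zero_add]
      exact hBd
    · -- Δ' degree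
      have hh₁d : h₁.natDegree ≤ n - d := by
        have : (C π * h₁).natDegree = h₁.natDegree := by
          rw [natDegree_C_mul (by exact hπ)]
        rw [← this, ← hh₁]
        exact le_trans (natDegree_sub_le _ _) (max_le hH hH0)
      have hg₁d : g₁.natDegree ≤ d := by
        have : (C π * g₁).natDegree = g₁.natDegree := by
          rw [natDegree_C_mul (by exact hπ)]
        rw [← this, ← hg₁]
        refine le_trans (natDegree_sub_le _ _) (max_le (le_of_eq hGd) (le_of_eq hG0d))
      refine le_trans (natDegree_sub_le _ _) (max_le (le_trans (natDegree_sub_le _ _) (max_le ?_ ?_)) ?_)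
      · rw [natDegree_neg]
        exact le_trans natDegree_mul_le (by omega)
      · exact le_trans natDegree_mul_le (by omega)
      · refine le_trans natDegree_mul_le ?_
        rw [← C_pow, natDegree_C, zero_add]
        exact le_trans natDegree_mul_le (by omega)
    · -- main equation
      linear_combination hFGH - (C π) ^ (k+1) * hBG0 - (C π) ^ (k+1) * A * hh₁ -
        (C π) ^ (k+1) * B * hg₁
    · exact ⟨g₁ + (C π) ^ k * A, by linear_combination hg₁⟩
    · exact ⟨h₁ + (C π) ^ k * B, by linear_combination hh₁⟩
  -- package the invariant
  let Poly3 := Polynomial ℤ_[p] × Polynomial ℤ_[p] × Polynomial ℤ_[p]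
  let Inv : ℕ → Poly3 → Prop := fun k t =>
    t.1.Monic ∧ t.1.natDegree = d ∧ t.2.1.natDegree ≤ n - d ∧ t.2.2.natDegree ≤ n ∧
    (F - t.1 * t.2.1 = (C π) ^ (k+1) * t.2.2) ∧ (C π ∣ t.1 - G0) ∧ (C π ∣ t.2.1 - H0)
  have step' : ∀ k (t : Poly3), Inv k t → ∃ t' : Poly3, Inv (k+1) t' ∧
      ((C π) ^ (k+1) ∣ t'.1 - t.1) ∧ ((C π) ^ (k+1) ∣ t'.2.1 - t.2.1) := by
    rintro k ⟨G, H, Δ⟩ ⟨h1, h2, h3, h4, h5, h6, h7⟩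
    obtain ⟨G', H', Δ', hinv, hd1, hd2⟩ := step k G H Δ h1 h2 h3 h4 h5 h6 h7
    exact ⟨(G', H', Δ'), ⟨hinv.1, hinv.2.1, hinv.2.2.1, hinv.2.2.2.1, hinv.2.2.2.2.1,
      hinv.2.2.2.2.2.1, hinv.2.2.2.2.2.2⟩, hd1, hd2⟩
  have inv0 : Inv 0 (G0, H0, Δ0) := by
    refine ⟨hG0m, hG0d, hH0, hΔ0, ?_, by simp, by simp⟩
    rw [pow_one]; exact happ
  choose next hnext hnextG hnextH using step'
  let seq : ∀ k : ℕ, {t : Poly3 // Inv k t} := fun k =>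
    Nat.rec ⟨(G0, H0, Δ0), inv0⟩ (fun k ih => ⟨next k ih.1 ih.2, hnext k ih.1 ih.2⟩) k
  have hseq : ∀ k, (seq (k+1)).1 = next k (seq k).1 (seq k).2 := fun k => rfl
  set Gs : ℕ → Polynomial ℤ_[p] := fun k => (seq k).1.1 with hGs
  set Hs : ℕ → Polynomial ℤ_[p] := fun k => (seq k).1.2.1 with hHs
  have hinv : ∀ k, Inv k (seq k).1 := fun k => (seq k).2
  have hdG : ∀ k, (C π) ^ (k+1) ∣ Gs (k+1) - Gs k := by
    intro k
    have := hnextG k (seq k).1 (seq k).2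
    rwa [← hseq k] at this
  have hdH : ∀ k, (C π) ^ (k+1) ∣ Hs (k+1) - Hs k := by
    intro k
    have := hnextH k (seq k).1 (seq k).2
    rwa [← hseq k] at this
  -- telescoping
  have tele : ∀ (fs : ℕ → Polynomial ℤ_[p]), (∀ k, (C π) ^ (k+1) ∣ fs (k+1) - fs k) →
      ∀ m k, m ≤ k → (C π) ^ m ∣ fs k - fs m := by
    intro fs hfs m k hmk
    induction k, hmk using Nat.le_induction with
    | base => simp
    | succ k hmk ih =>
      have h1 : (C π) ^ m ∣ fs (k+1) - fs k :=
        dvd_trans (pow_dvd_pow _ (by omega)) (hfs k)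
      have := dvd_add h1 ih
      rwa [sub_add_sub_cancel] at this
  have teleG := tele Gs hdG
  have teleH := tele Hs hdH
  -- coefficientwise limits
  have hlim : ∀ (fs : ℕ → Polynomial ℤ_[p]), (∀ m k, m ≤ k → (C π) ^ m ∣ fs k - fs m) →
      ∀ j : ℕ, ∃ L : ℤ_[p], ∀ k, π ^ k ∣ (fs k).coeff j - L := by
    intro fs hfs j
    have hcompat : ∀ {m k : ℕ}, m ≤ k →
        (fun k => (fs k).coeff j) m ≡ (fun k => (fs k).coeff j) k
          [SMOD (IsLocalRing.maximalIdeal ℤ_[p] ^ m • ⊤ : Ideal ℤ_[p])] := by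
      intro m k hmk
      rw [Ideal.smul_eq_mul, Ideal.mul_top, SModEq.sub_mem, PadicInt.maximalIdeal_eq_span_p,
        Ideal.span_singleton_pow, Ideal.mem_span_singleton]
      have := hfs m k hmk
      rw [← C_pow, C_dvd_iff_dvd_coeff] at this
      have := this j
      rw [coeff_sub] at this
      exact dvd_sub_comm.mp this
    obtain ⟨L, hL⟩ := IsPrecomplete.prec (IsAdicComplete.toIsPrecomplete) @hcompat
    refine ⟨L, fun k => ?_⟩
    have := hL k
    rw [Ideal.smul_eq_mul, Ideal.mul_top, SModEq.sub_mem, PadicInt.maximalIdeal_eq_span_p,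
      Ideal.span_singleton_pow, Ideal.mem_span_singleton] at this
    exact this
  obtain ⟨gL, hgL⟩ := by
    have := hlim Gs teleG
    exact Classical.axiomOfChoice this
  obtain ⟨hL, hhL⟩ := by
    have := hlim Hs teleH
    exact Classical.axiomOfChoice this
  set G : Polynomial ℤ_[p] := ∑ i ∈ Finset.range (d+1), C (gL i) * X ^ i with hGdef
  set H : Polynomial ℤ_[p] := ∑ i ∈ Finset.range (n - d + 1), C (hL i) * X ^ i with hHdef
  have hzero : ∀ x : ℤ_[p], (∀ k : ℕ, π ^ k ∣ x) → x = 0 := by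
    intro x hx
    refine IsHausdorff.haus' (I := IsLocalRing.maximalIdeal ℤ_[p]) x fun k => ?_
    rw [SModEq.sub_mem, sub_zero, Ideal.smul_eq_mul, Ideal.mul_top,
      PadicInt.maximalIdeal_eq_span_p, Ideal.span_singleton_pow, Ideal.mem_span_singleton]
    exact hx k
  -- G approximates Gs k
  have hdGG : ∀ k, (C π) ^ k ∣ G - Gs k := by
    intro k
    rw [← C_pow, C_dvd_iff_dvd_coeff]
    intro j
    rw [coeff_sub, hGdef, coeff_sum_C_mul_X_pow]
    by_cases hj : j < d + 1
    · rw [if_pos hj]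
      have := hgL j k
      exact dvd_sub_comm.mp this
    · rw [if_neg hj]
      have : (Gs k).coeff j = 0 := by
        apply coeff_eq_zero_of_natDegree_lt
        rw [(hinv k).2.1]; omega
      rw [this]; simp
  have hdHH : ∀ k, (C π) ^ k ∣ H - Hs k := by
    intro k
    rw [← C_pow, C_dvd_iff_dvd_coeff]
    intro j
    rw [coeff_sub, hHdef, coeff_sum_C_mul_X_pow]
    by_cases hj : j < n - d + 1
    · rw [if_pos hj]
      have := hhL j k
      exact dvd_sub_comm.mp this
    · rw [if_neg hj]
      have : (Hs k).coeff j = 0 := by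
        apply coeff_eq_zero_of_natDegree_lt
        have hH' : (Hs k).natDegree ≤ n - d := (hinv k).2.2.1
        omega
      rw [this]; simp
  -- F = G * H
  have hFGH : F = G * H := by
    have key : ∀ k, (C π) ^ k ∣ F - G * H := by
      intro k
      have e : F - G * H = (F - Gs k * Hs k) + ((Gs k - G) * Hs k) + (G * (Hs k - H)) := by
        ring
      rw [e]
      refine dvd_add (dvd_add ?_ ?_) ?_
      · rw [(hinv k).2.2.2.2.1]
        exact Dvd.dvd.mul_right (pow_dvd_pow _ (by omega)) _
      · exact Dvd.dvd.mul_right (dvd_sub_comm.mp (hdGG k)) _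
      · exact Dvd.dvd.mul_left (dvd_sub_comm.mp (hdHH k)) G
    have : F - G * H = 0 := by
      ext j
      rw [coeff_zero]
      refine hzero _ fun k => ?_
      have := key k
      rw [← C_pow, C_dvd_iff_dvd_coeff] at this
      exact this j
    linear_combination this
  have hGcd : G.coeff d = 1 := by
    have h1 : ∀ k, π ^ k ∣ gL d - 1 := by
      intro k
      have hm : (Gs k).Monic := (hinv k).1
      have hd : (Gs k).natDegree = d := (hinv k).2.1
      have h2 : (Gs k).coeff d = 1 := by
        have := hm.coeff_natDegree
        rwa [hd] at this
      have := hgL d k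
      rw [h2] at this
      exact dvd_sub_comm.mp this
    have := hzero _ h1
    have hGc : G.coeff d = gL d := by
      rw [hGdef, coeff_sum_C_mul_X_pow, if_pos (by omega)]
    rw [hGc]
    exact sub_eq_zero.mp this
  have hGle : G.natDegree ≤ d := by
    rw [natDegree_le_iff_coeff_eq_zero]
    intro j hj
    rw [hGdef, coeff_sum_C_mul_X_pow, if_neg (by omega)]
  exact ⟨G, H, hFGH, monic_of_natDegree_le_of_coeff_eq_one d hGle hGcd,
    le_antisymm hGle (le_natDegree_of_ne_zero (by rw [hGcd]; exact one_ne_zero))⟩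

theorem padic_irreducible_coeff_bound (f : Polynomial ℚ_[p]) (hmo : f.Monic)
    (hirr : Irreducible f) : ∀ i, ‖f.coeff i‖ ≤ max 1 ‖f.coeff 0‖ := by
  by_contra hcon
  push_neg at hcon
  obtain ⟨i₀, hi₀⟩ := hcon
  set n := f.natDegree with hn
  have hmax_pos : (0:ℝ) < max 1 ‖f.coeff 0‖ := lt_of_lt_of_le one_pos (le_max_left _ _)
  have hi₀n : i₀ ≤ n := le_natDegree_of_ne_zero (fun hz => by
    rw [hz] at hi₀; norm_num at hi₀)
  have hne : (Finset.range (n+1)).Nonempty := ⟨0, by simp⟩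
  set μ := (Finset.range (n+1)).sup' hne (fun i => ‖f.coeff i‖) with hμ
  have hle_μ : ∀ i, i ≤ n → ‖f.coeff i‖ ≤ μ := fun i hi =>
    Finset.le_sup' (f := fun i => ‖f.coeff i‖) (Finset.mem_range.2 (by omega))
  have hall_μ : ∀ i, ‖f.coeff i‖ ≤ μ := by
    intro i
    by_cases hi : i ≤ n
    · exact hle_μ i hi
    · rw [coeff_eq_zero_of_natDegree_lt (by omega)]
      simp only [norm_zero]
      exact le_trans (le_of_lt hmax_pos) (le_trans (le_of_lt hi₀) (hle_μ i₀ hi₀n))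
  have hμ1 : 1 < μ := lt_of_le_of_lt (le_max_left 1 ‖f.coeff 0‖) (lt_of_lt_of_le hi₀ (hle_μ i₀ hi₀n))
  have hμ0 : ‖f.coeff 0‖ < μ :=
    lt_of_le_of_lt (le_max_right 1 ‖f.coeff 0‖) (lt_of_lt_of_le hi₀ (hle_μ i₀ hi₀n))
  have hPex : ∃ i, ‖f.coeff i‖ = μ := by
    obtain ⟨i, hi, hieq⟩ := Finset.exists_mem_eq_sup' hne (fun i => ‖f.coeff i‖)
    exact ⟨i, hieq.symm⟩
  set j := Nat.find hPex with hjdef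
  have hj : ‖f.coeff j‖ = μ := Nat.find_spec hPex
  have hjmin : ∀ i, i < j → ‖f.coeff i‖ < μ := fun i hi =>
    lt_of_le_of_ne (hall_μ i) (Nat.find_min hPex hi)
  have hjn : j ≤ n := by
    by_contra h
    rw [coeff_eq_zero_of_natDegree_lt (by omega)] at hj
    simp at hj
    linarith
  have hj0 : 0 < j := by
    rcases Nat.eq_zero_or_pos j with h | h
    · rw [h] at hj; linarith
    · exact h
  have hjn' : j < n := by
    rcases lt_or_eq_of_le hjn with h | h
    · exact h
    · exfalso
      rw [h] at hj
      rw [show f.coeff n = 1 from hmo.coeff_natDegree] at hj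
      simp at hj
      linarith
  set a := f.coeff j with ha
  have hane : a ≠ 0 := by
    intro h
    rw [h] at hj
    simp at hj
    linarith
  set g := C a⁻¹ * f with hg
  have hgc : ∀ i, g.coeff i = a⁻¹ * f.coeff i := fun i => coeff_C_mul f
  have hμpos : (0:ℝ) < μ := by linarith
  have hgle : ∀ i, ‖g.coeff i‖ ≤ 1 := by
    intro i
    rw [hgc, norm_mul, norm_inv, hj]
    calc μ⁻¹ * ‖f.coeff i‖ ≤ μ⁻¹ * μ := by
          have := hall_μ i
          have : (0:ℝ) ≤ μ⁻¹ := by positivity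
          nlinarith [hall_μ i]
      _ = 1 := inv_mul_cancel₀ (ne_of_gt hμpos)
  -- lift g to ℤ_[p]
  have hlift : ∃ F : Polynomial ℤ_[p], F.map (algebraMap ℤ_[p] ℚ_[p]) = g := by
    have : g ∈ Polynomial.lifts (algebraMap ℤ_[p] ℚ_[p]) := by
      rw [Polynomial.lifts_iff_coeff_lifts]
      intro i
      exact ⟨⟨g.coeff i, hgle i⟩, rfl⟩
    obtain ⟨q, hq⟩ := this
    exact ⟨q, hq⟩
  obtain ⟨F, hF⟩ := hlift
  have hinj : Function.Injective (algebraMap ℤ_[p] ℚ_[p]) := fun x y h => Subtype.coe_injective h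
  have hFc : ∀ i, (algebraMap ℤ_[p] ℚ_[p]) (F.coeff i) = g.coeff i := by
    intro i
    rw [← hF, coeff_map]
  have hFnorm : ∀ i, ‖F.coeff i‖ = ‖g.coeff i‖ := by
    intro i
    rw [← hFc i]
    rfl
  have hFj : F.coeff j = 1 := by
    apply hinj
    rw [hFc, map_one, hgc, ← ha, inv_mul_cancel₀ hane]
  have hFhigh : ∀ i, n < i → F.coeff i = 0 := by
    intro i hi
    apply hinj
    rw [hFc, map_zero, hgc, coeff_eq_zero_of_natDegree_lt (by omega), mul_zero]
  have hFn : F.natDegree ≤ n := natDegree_le_iff_coeff_eq_zero.2 hFhigh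
  have hFlow : ∀ i, i < j → (p : ℤ_[p]) ∣ F.coeff i := by
    intro i hi
    rw [← PadicInt.norm_lt_one_iff_dvd, hFnorm, hgc, norm_mul, norm_inv, hj]
    have h1 := hjmin i hi
    have h2 : (0:ℝ) < μ⁻¹ := by positivity
    calc μ⁻¹ * ‖f.coeff i‖ < μ⁻¹ * μ := by nlinarith
      _ = 1 := inv_mul_cancel₀ (ne_of_gt hμpos)
  set H0 : Polynomial ℤ_[p] := ∑ i ∈ Finset.range (n - j + 1), C (F.coeff (j + i)) * X ^ i with hH0
  set low : Polynomial ℤ_[p] := ∑ i ∈ Finset.range j, C (F.coeff i) * X ^ i with hlow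
  have hsplit : F = low + H0 * X ^ j := by
    ext k
    rw [coeff_add, hlow, coeff_sum_C_mul_X_pow, coeff_mul_X_pow', hH0,
      coeff_sum_C_mul_X_pow]
    by_cases hk : k < j
    · rw [if_pos hk, if_neg (by omega)]
      simp
    · rw [if_neg hk, if_pos (by omega), zero_add]
      by_cases hk2 : k ≤ n
      · rw [if_pos (by omega)]
        congr 1
        omega
      · rw [if_neg (by omega), hFhigh k (by omega)]
  have hH0c0 : H0.coeff 0 = 1 := by
    rw [hH0, coeff_sum_C_mul_X_pow, if_pos (by omega), add_zero, hFj]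
  have hH0deg : H0.natDegree ≤ n - j := by
    rw [natDegree_le_iff_coeff_eq_zero]
    intro i hi
    rw [hH0, coeff_sum_C_mul_X_pow, if_neg (by omega)]
  have hlowdvd : C (p : ℤ_[p]) ∣ low := by
    rw [C_dvd_iff_dvd_coeff]
    intro i
    rw [hlow, coeff_sum_C_mul_X_pow]
    by_cases hi : i < j
    · rw [if_pos hi]; exact hFlow i hi
    · rw [if_neg hi]; exact dvd_zero _
  obtain ⟨Δ0, hΔ0eq⟩ := hlowdvd
  have hΔ0deg : Δ0.natDegree ≤ n := by
    have h1 : low.natDegree ≤ n := by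
      rw [natDegree_le_iff_coeff_eq_zero]
      intro i hi
      rw [hlow, coeff_sum_C_mul_X_pow, if_neg (by omega)]
    have hp0 : (p : ℤ_[p]) ≠ 0 := Nat.cast_ne_zero.mpr (Fact.out : p.Prime).ne_zero
    have : (C (p:ℤ_[p]) * Δ0).natDegree = Δ0.natDegree := natDegree_C_mul hp0
    rw [← hΔ0eq] at this
    omega
  have happ : F - X ^ j * H0 = C (p : ℤ_[p]) * Δ0 := by
    rw [← hΔ0eq, hsplit]; ring
  -- Bezout
  set D := H0.divX with hD
  have hH0D : X * D + 1 = H0 := by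
    have := X_mul_divX_add H0
    rwa [hH0c0, map_one] at this
  set W : Polynomial ℤ_[p] := ∑ k ∈ Finset.range j, (1 - H0) ^ k with hW
  set U : Polynomial ℤ_[p] := (-D) ^ j with hU
  have hbez : U * X ^ j + W * H0 = 1 := by
    have h1 : W * H0 = 1 - (1 - H0) ^ j := by
      have := geom_sum_mul (1 - H0) j
      rw [← hW] at this
      linear_combination -this
    have h2 : (1 - H0) = -D * X := by linear_combination hH0D
    rw [h1, h2, mul_pow, hU]
    ring
  obtain ⟨G, H, hGH, hGm, hGd⟩ := padic_hensel_factorization F (X ^ j) H0 U W Δ0 n j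
    (le_of_lt hjn') hFn (monic_X_pow j) (natDegree_X_pow j) hH0deg hbez hΔ0deg happ
  -- transport to ℚ_[p]
  have hmap : C a⁻¹ * f = (G.map (algebraMap ℤ_[p] ℚ_[p])) * (H.map (algebraMap ℤ_[p] ℚ_[p])) := by
    rw [← hg, ← hF, hGH, Polynomial.map_mul]
  have hfact : f = (G.map (algebraMap ℤ_[p] ℚ_[p])) * (C a * H.map (algebraMap ℤ_[p] ℚ_[p])) := by
    have := congrArg (fun q => C a * q) hmap
    rw [← mul_assoc, ← C_mul, mul_inv_cancel₀ hane, C_1, one_mul] at this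
    rw [this]; ring
  have hGmap_m : (G.map (algebraMap ℤ_[p] ℚ_[p])).Monic := hGm.map _
  have hGmap_d : (G.map (algebraMap ℤ_[p] ℚ_[p])).natDegree = j := by
    rw [hGm.natDegree_map, hGd]
  rcases hirr.isUnit_or_isUnit hfact with hu | hu
  · have := natDegree_eq_zero_of_isUnit hu
    omega
  · have hne1 : (G.map (algebraMap ℤ_[p] ℚ_[p])) ≠ 0 := hGmap_m.ne_zero
    have hne2 : (C a * H.map (algebraMap ℤ_[p] ℚ_[p])) ≠ 0 := by
      intro h
      rw [h, mul_zero] at hfact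
      exact hmo.ne_zero hfact
    have hdeg := natDegree_mul hne1 hne2
    rw [← hfact, hGmap_d] at hdeg
    have := natDegree_eq_zero_of_isUnit hu
    omega

instance : @IsScalarTower ℤ_[p] ℚ_[p] (AlgebraicClosure ℚ_[p]) Algebra.toSMul Algebra.toSMul
    (@Algebra.toSMul _ _ _ _ (algebraPadicIntAlgClosure p)) :=
  @IsScalarTower.of_algebraMap_eq' ℤ_[p] ℚ_[p] (AlgebraicClosure ℚ_[p]) _ _ _ _ _
    (algebraPadicIntAlgClosure p) rfl

lemma integral_of_norm_le_one (x : K) (g : Polynomial ℚ_[p]) (hm : g.Monic)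
    (h0 : aeval x g = 0) (hc : ∀ i, ‖g.coeff i‖ ≤ 1) : IsIntegral ℤ_[p] x := by
  have hlift : g ∈ Polynomial.lifts (algebraMap ℤ_[p] ℚ_[p]) := by
    rw [Polynomial.lifts_iff_coeff_lifts]
    intro i
    exact ⟨⟨g.coeff i, hc i⟩, rfl⟩
  obtain ⟨F, hF, _, hFm⟩ := Polynomial.lifts_and_degree_eq_and_monic hlift hm
  refine ⟨F, hFm, ?_⟩
  rw [← aeval_def]
  rw [← aeval_map_algebraMap ℚ_[p] x F, hF, h0]

lemma padic_integral_or_inv_integral (x : K) (hx : x ≠ 0) :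
    IsIntegral ℤ_[p] x ∨ IsIntegral ℤ_[p] x⁻¹ := by
  have halg : IsIntegral ℚ_[p] x := Algebra.IsIntegral.isIntegral x
  set f := minpoly ℚ_[p] x with hf
  have hfm : f.Monic := minpoly.monic halg
  have hfirr : Irreducible f := minpoly.irreducible halg
  have hbound := padic_irreducible_coeff_bound f hfm hfirr
  by_cases h : ‖f.coeff 0‖ ≤ 1
  · left
    refine integral_of_norm_le_one x f hfm (minpoly.aeval _ _) fun i => ?_
    have := hbound i
    rwa [max_eq_left h] at this
  · right
    push_neg at h
    set n := f.natDegree with hn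
    have hn1 : 1 ≤ n := minpoly.natDegree_pos halg
    set a0 := f.coeff 0 with ha0
    have ha0ne : a0 ≠ 0 := minpoly.coeff_zero_ne_zero halg hx
    set g : Polynomial ℚ_[p] := ∑ i ∈ Finset.range (n+1), C (f.coeff (n - i) * a0⁻¹) * X ^ i
      with hg
    have hgc : ∀ j, g.coeff j = if j < n + 1 then f.coeff (n - j) * a0⁻¹ else 0 := fun j =>
      coeff_sum_C_mul_X_pow _ _ _
    have hgm : g.Monic := by
      refine monic_of_natDegree_le_of_coeff_eq_one n ?_ ?_
      · rw [natDegree_le_iff_coeff_eq_zero]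
        intro j hj
        rw [hgc, if_neg (by omega)]
      · rw [hgc, if_pos (by omega), Nat.sub_self, ← ha0, mul_inv_cancel₀ ha0ne]
    have hgnorm : ∀ i, ‖g.coeff i‖ ≤ 1 := by
      intro i
      rw [hgc]
      by_cases hi : i < n + 1
      · rw [if_pos hi, norm_mul, norm_inv]
        have h1 : ‖f.coeff (n - i)‖ ≤ ‖a0‖ := by
          have := hbound (n - i)
          rwa [max_eq_right (le_of_lt h)] at this
        have h2 : (0:ℝ) < ‖a0‖ := by positivity
        calc ‖f.coeff (n-i)‖ * ‖a0‖⁻¹ ≤ ‖a0‖ * ‖a0‖⁻¹ := by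
              have : (0:ℝ) ≤ ‖a0‖⁻¹ := by positivity
              nlinarith
          _ = 1 := mul_inv_cancel₀ (ne_of_gt h2)
      · rw [if_neg hi]; simp
    have heval : aeval x⁻¹ g = 0 := by
      have hxn : x ^ n ≠ 0 := pow_ne_zero _ hx
      have hkey : (aeval x⁻¹ g) * x ^ n = 0 := by
        have e1 : aeval x⁻¹ g = ∑ i ∈ Finset.range (n+1),
            algebraMap ℚ_[p] K (f.coeff (n - i) * a0⁻¹) * (x⁻¹) ^ i := by
          rw [hg, map_sum]
          congr 1
          ext i
          simp [Algebra.smul_def]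
        rw [e1, Finset.sum_mul]
        have e2 : ∀ i ∈ Finset.range (n+1),
            algebraMap ℚ_[p] K (f.coeff (n - i) * a0⁻¹) * (x⁻¹) ^ i * x ^ n
            = algebraMap ℚ_[p] K a0⁻¹ * (algebraMap ℚ_[p] K (f.coeff (n - i)) * x ^ (n - i)) := by
          intro i hi
          rw [Finset.mem_range] at hi
          have hpow : (x⁻¹) ^ i * x ^ n = x ^ (n - i) := by
            rw [inv_pow]
            field_simp
            rw [← pow_add]
            congr 1
            omega
          rw [map_mul, mul_assoc, mul_assoc, hpow]
          ring
        rw [Finset.sum_congr rfl e2, ← Finset.mul_sum]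
        have e3 : ∑ i ∈ Finset.range (n+1),
            algebraMap ℚ_[p] K (f.coeff (n - i)) * x ^ (n - i)
            = ∑ i ∈ Finset.range (n+1), algebraMap ℚ_[p] K (f.coeff i) * x ^ i := by
          have := Finset.sum_range_reflect
            (fun i => algebraMap ℚ_[p] K (f.coeff i) * x ^ i) (n+1)
          simpa using this
        rw [e3]
        have e4 : ∑ i ∈ Finset.range (n+1), algebraMap ℚ_[p] K (f.coeff i) * x ^ i
            = aeval x f := by
          rw [aeval_eq_sum_range]
          congr 1
          ext i
          rw [Algebra.smul_def]
        rw [e4, minpoly.aeval, mul_zero]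
      rcases mul_eq_zero.mp hkey with h' | h'
      · exact h'
      · exact absurd h' hxn
    exact integral_of_norm_le_one x⁻¹ g hgm heval hgnorm

instance (p : ℕ) [Fact p.Prime] : IsDomain (PadicIntBar p) :=
  inferInstanceAs (IsDomain (integralClosure ℤ_[p] (AlgebraicClosure ℚ_[p])))

instance : CharZero K :=
  charZero_of_injective_algebraMap (algebraMap ℚ_[p] (AlgebraicClosure ℚ_[p])).injective

namespace PadicIntBar

lemma coe_injective : Function.Injective (fun a : PadicIntBar p => (a.1 : K)) :=
  fun _ _ h => Subtype.ext h

lemma coe_mul (a b : PadicIntBar p) : (a * b).1 = a.1 * b.1 := rfl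
lemma coe_one : ((1 : PadicIntBar p)).1 = 1 := rfl
lemma coe_zero : ((0 : PadicIntBar p)).1 = 0 := rfl
lemma coe_ne_zero {a : PadicIntBar p} (ha : a ≠ 0) : a.1 ≠ 0 :=
  fun h => ha (Subtype.ext h)

lemma dvd_total (a b : PadicIntBar p) : a ∣ b ∨ b ∣ a := by
  by_cases hb : b = 0
  · left; rw [hb]; exact dvd_zero a
  by_cases ha : a = 0
  · right; rw [ha]; exact dvd_zero b
  have haK := coe_ne_zero ha
  have hbK := coe_ne_zero hb
  have hx : a.1 / b.1 ≠ 0 := div_ne_zero haK hbK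
  rcases padic_integral_or_inv_integral (a.1 / b.1) hx with h | h
  · right
    refine ⟨⟨a.1 / b.1, h⟩, coe_injective ?_⟩
    show a.1 = b.1 * (a.1 / b.1)
    field_simp
  · left
    refine ⟨⟨(a.1 / b.1)⁻¹, h⟩, coe_injective ?_⟩
    show b.1 = a.1 * (a.1 / b.1)⁻¹
    rw [inv_div]
    field_simp

instance (p : ℕ) [Fact p.Prime] : ValuationRing (PadicIntBar p) where
  cond' a b := by
    rcases dvd_total a b with ⟨c, hc⟩ | ⟨c, hc⟩
    · exact ⟨c, Or.inl hc.symm⟩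
    · exact ⟨c, Or.inr hc.symm⟩

instance (p : ℕ) [Fact p.Prime] : IsLocalRing (PadicIntBar p) :=
  ValuationRing.isLocalRing _

lemma isUnit_of_inv_integral (u : PadicIntBar p) (hu : u.1 ≠ 0)
    (h : IsIntegral ℤ_[p] (u.1)⁻¹) : IsUnit u :=
  IsUnit.of_mul_eq_one (a := u) ⟨(u.1)⁻¹, h⟩ (coe_injective (by
    show u.1 * (u.1)⁻¹ = 1
    exact mul_inv_cancel₀ hu))

lemma not_prime (q : PadicIntBar p) : ¬ Prime q := by
  rintro ⟨hq0, hqu, hqd⟩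
  obtain ⟨y, hy⟩ := IsAlgClosed.exists_pow_nat_eq (q.1 : K) (n := 2) (by norm_num)
  have hyint : IsIntegral ℤ_[p] y := by
    refine IsIntegral.of_pow (n := 2) (by norm_num) ?_
    rw [hy]
    exact q.2
  set s : PadicIntBar p := ⟨y, hyint⟩ with hs
  have hss : s * s = q := coe_injective (by
    show y * y = q.1
    rw [← hy]; ring)
  obtain ⟨t, ht⟩ := (hqd s s (hss ▸ dvd_refl q)).elim id id
  have hzero : q * (1 - q * (t * t)) = 0 := by
    linear_combination (-1 : PadicIntBar p) * hss + (s + q * t) * ht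
  rcases mul_eq_zero.mp hzero with h | h
  · exact hq0 h
  · exact hqu (IsUnit.of_mul_eq_one (a := q) (t * t) (by linear_combination -h))

lemma coe_natCast (n : ℕ) : ((n : PadicIntBar p)).1 = (n : K) := by
  exact_mod_cast map_natCast ((integralClosure ℤ_[p] (AlgebraicClosure ℚ_[p])).val) n

lemma p_ne_zero : ((p : PadicIntBar p)) ≠ 0 := by
  intro h
  have := congrArg Subtype.val h
  rw [coe_natCast, coe_zero] at this
  exact Nat.cast_ne_zero.mpr (Fact.out : p.Prime).ne_zero this

lemma p_not_unit : ¬ IsUnit ((p : PadicIntBar p)) := by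
  intro h
  obtain ⟨b, hb⟩ := isUnit_iff_exists_inv.mp h
  have hbK : (p : K) * b.1 = 1 := by
    have := congrArg Subtype.val hb
    rwa [coe_mul, coe_natCast, coe_one] at this
  have hpK : (p : K) ≠ 0 := Nat.cast_ne_zero.mpr (Fact.out : p.Prime).ne_zero
  have hb1 : b.1 = algebraMap ℚ_[p] K ((p : ℚ_[p])⁻¹) := by
    rw [map_inv₀, map_natCast]
    exact eq_inv_of_mul_eq_one_left (by linear_combination hbK)
  have hint : IsIntegral ℤ_[p] (algebraMap ℚ_[p] K ((p : ℚ_[p])⁻¹)) := hb1 ▸ b.2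
  rw [isIntegral_algebraMap_iff (algebraMap ℚ_[p] (AlgebraicClosure ℚ_[p])).injective] at hint
  obtain ⟨y, hy⟩ := IsIntegrallyClosed.isIntegral_iff.mp hint
  have hnorm : ‖(p : ℚ_[p])⁻¹‖ ≤ 1 := by
    rw [← hy]
    exact PadicInt.norm_le_one y
  rw [norm_inv, Padic.norm_p] at hnorm
  have hp1 : (1:ℝ) < p := by exact_mod_cast (Fact.out : p.Prime).one_lt
  rw [inv_inv] at hnorm
  linarith

lemma root_unity_integral {n : ℕ} (hn : n ≠ 0) (w : K) (hw : w ^ n = 1) :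
    IsIntegral ℤ_[p] w := by
  refine ⟨X ^ n - C 1, monic_X_pow_sub_C _ hn, ?_⟩
  have : (X ^ n - C 1 : ℤ_[p][X]).eval₂ (algebraMap ℤ_[p] K) w = w ^ n - 1 := by
    simp
  rw [this, hw, sub_self]

/-- For a nontrivial `n`-th root of unity `z` (with `p ∤ n`), `1 - z` divides `n`
inside the integral closure. -/
lemma one_sub_root_unity_dvd {n : ℕ} (hn : n ≠ 0) (z : K) (hz : z ^ n = 1) (hz1 : z ≠ 1) :
    ∃ ρ ∈ integralClosure ℤ_[p] (AlgebraicClosure ℚ_[p]), (1 - z) * ρ = (n : K) := by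
  classical
  have hnK : ((n : K)) ≠ 0 := Nat.cast_ne_zero.mpr hn
  set q : Polynomial K := X ^ n - C 1 with hq
  have hmonic : q.Monic := monic_X_pow_sub_C _ hn
  have hqne : q ≠ 0 := hmonic.ne_zero
  have hmem : ∀ w : K, w ∈ q.roots ↔ w ^ n = 1 := by
    intro w
    rw [mem_roots hqne]
    simp only [hq, IsRoot.def, eval_sub, eval_pow, eval_X, eval_C]
    constructor
    · intro h; linear_combination h
    · intro h; rw [h, sub_self]
  have hfact : q = (q.roots.map (fun w => X - C w)).prod :=
    (IsAlgClosed.splits q).eq_prod_roots_of_monic hmonic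
  have h1mem : (1 : K) ∈ q.roots := (hmem 1).mpr (one_pow n)
  have hzmem : z ∈ q.roots.erase 1 := (Multiset.mem_erase_of_ne hz1).mpr ((hmem z).mpr hz)
  -- geometric sum identity
  set Φ : Polynomial K := ∑ i ∈ Finset.range n, X ^ i with hΦ
  have hgeom : Φ * (X - 1) = X ^ n - 1 := geom_sum_mul (X : Polynomial K) n
  have hq1 : q = (X - 1) * Φ := by
    rw [hq, C_1, ← hgeom]
    ring
  have herase : q.roots = 1 ::ₘ q.roots.erase 1 := (Multiset.cons_erase h1mem).symm
  have hΦprod : Φ = ((q.roots.erase 1).map (fun w => X - C w)).prod := by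
    have h2 : q = (X - C 1) * ((q.roots.erase 1).map (fun w => X - C w)).prod := by
      conv_lhs => rw [hfact, herase, Multiset.map_cons, Multiset.prod_cons]
    rw [C_1] at h2
    conv at h2 => lhs; rw [hq1]
    exact mul_left_cancel₀ (show (X - 1 : Polynomial K) ≠ 0 by
      rw [← C_1]; exact X_sub_C_ne_zero 1) h2
  have heval : (n : K) = ((q.roots.erase 1).map (fun w => 1 - w)).prod := by
    have h3 : Polynomial.eval 1 Φ = (n : K) := by
      rw [hΦ, eval_finset_sum]
      simp
    have h4 : Polynomial.eval 1 (((q.roots.erase 1).map (fun w => X - C w)).prod)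
        = ((q.roots.erase 1).map (fun w => 1 - w)).prod := by
      rw [eval_multiset_prod, Multiset.map_map]
      congr 1
      apply Multiset.map_congr rfl
      intro w _
      simp
    rw [← h3, hΦprod, h4]
  have herase2 : q.roots.erase 1 = z ::ₘ (q.roots.erase 1).erase z :=
    (Multiset.cons_erase hzmem).symm
  refine ⟨(((q.roots.erase 1).erase z).map (fun w => 1 - w)).prod, ?_, ?_⟩
  · apply Subalgebra.multiset_prod_mem
    intro x hx
    rw [Multiset.mem_map] at hx
    obtain ⟨w, hw, rfl⟩ := hx
    have hwroot : w ∈ q.roots := Multiset.mem_of_mem_erase (Multiset.mem_of_mem_erase hw)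
    have hwn : w ^ n = 1 := (hmem w).mp hwroot
    exact sub_mem (one_mem _) (root_unity_integral hn w hwn)
  · rw [heval]
    conv_rhs => rw [herase2]
    rw [Multiset.map_cons, Multiset.prod_cons]

lemma natCast_isUnit {n : ℕ} (hpn : ¬ (p ∣ n)) : IsUnit ((n : PadicIntBar p)) := by
  have h1 : IsUnit ((n : ℤ_[p])) := by
    rw [PadicInt.isUnit_iff]
    refine le_antisymm (PadicInt.norm_le_one _) ?_
    by_contra h
    push_neg at h
    have h2 : ‖((n : ℤ) : ℤ_[p])‖ < 1 := by push_cast; exact h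
    rw [PadicInt.norm_int_lt_one_iff_dvd] at h2
    exact hpn (by exact_mod_cast h2)
  obtain ⟨m, hm⟩ := isUnit_iff_exists_inv.mp h1
  have hmint : IsIntegral ℤ_[p] (algebraMap ℤ_[p] K m) := isIntegral_algebraMap
  refine IsUnit.of_mul_eq_one ⟨algebraMap ℤ_[p] K m, hmint⟩ (PadicIntBar.coe_injective ?_)
  show ((n : PadicIntBar p) * ⟨algebraMap ℤ_[p] K m, hmint⟩ : PadicIntBar p).1
      = (1 : PadicIntBar p).1
  refine (PadicIntBar.coe_mul (p := p) _ _).trans ?_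
  show ((n : PadicIntBar p)).1 * algebraMap ℤ_[p] K m = (1 : PadicIntBar p).1
  rw [PadicIntBar.coe_natCast, PadicIntBar.coe_one]
  show ((n : K)) * algebraMap ℤ_[p] K m = 1
  rw [show ((n : K)) = algebraMap ℤ_[p] K ((n : ℤ_[p])) by rw [map_natCast],
    ← map_mul, hm, map_one]

lemma exists_pairwise_unit_diff (N : ℕ) :
    ∃ S : Finset (PadicIntBar p), N ≤ S.card ∧
      ∀ a ∈ S, ∀ b ∈ S, a ≠ b → IsUnit (a - b) := by
  classical
  obtain ⟨n, hn⟩ : ∃ n : ℕ, n = p ^ (N + 1) - 1 := ⟨_, rfl⟩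
  have hp2 : 2 ≤ p := (Fact.out : p.Prime).two_le
  have hpow : N + 1 < p ^ (N + 1) := by
    calc N + 1 < 2 ^ (N + 1) := Nat.lt_two_pow_self
      _ ≤ p ^ (N + 1) := Nat.pow_le_pow_left hp2 _
  have hn0 : n ≠ 0 := by omega
  have hNn : N ≤ n := by omega
  have hpn : ¬ (p ∣ n) := by
    intro h
    have h1 : p ∣ p ^ (N + 1) := dvd_pow_self p (Nat.succ_ne_zero N)
    have h2 : p ∣ p ^ (N + 1) - n := Nat.dvd_sub h1 h
    have h3 : p ^ (N + 1) - n = 1 := by rw [hn]; omega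
    rw [h3] at h2
    exact absurd (Nat.le_of_dvd one_pos h2) (by omega)
  -- roots of X^n - 1 in K
  set q : Polynomial K := X ^ n - C 1 with hq
  have hmonic : q.Monic := monic_X_pow_sub_C _ hn0
  have hqne : q ≠ 0 := hmonic.ne_zero
  have hnK : ((n : K)) ≠ 0 := Nat.cast_ne_zero.mpr hn0
  have hsep : q.Separable := separable_X_pow_sub_C (1 : K) hnK one_ne_zero
  have hnodup : q.roots.Nodup := nodup_roots hsep
  have hcard : q.roots.card = n := by
    have hsplit := IsAlgClosed.splits (k := K) q
    rw [(splits_iff_card_roots).mp hsplit, hq, natDegree_X_pow_sub_C]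
  have hmem : ∀ w : K, w ∈ q.roots ↔ w ^ n = 1 := by
    intro w
    rw [mem_roots hqne]
    simp only [hq, IsRoot.def, eval_sub, eval_pow, eval_X, eval_C]
    constructor
    · intro h; linear_combination h
    · intro h; rw [h, sub_self]
  set T : Finset K := q.roots.toFinset with hT
  have hTcard : T.card = n := by
    rw [hT, Multiset.card_toFinset, Multiset.dedup_eq_self.mpr hnodup, hcard]
  have hTint : ∀ w ∈ T, IsIntegral ℤ_[p] w := by
    intro w hw
    have hw' : w ∈ q.roots := Multiset.mem_toFinset.mp hw
    exact root_unity_integral hn0 w ((hmem w).mp hw')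
  set S : Finset (PadicIntBar p) :=
    T.attach.image (fun w => (⟨w.1, hTint w.1 w.2⟩ : PadicIntBar p)) with hS
  have hinjS : Function.Injective
      (fun w : {x // x ∈ T} => (⟨w.1, hTint w.1 w.2⟩ : PadicIntBar p)) := by
    intro a b h
    have h' : (⟨a.1, hTint a.1 a.2⟩ : PadicIntBar p).1 = (⟨b.1, hTint b.1 b.2⟩ : PadicIntBar p).1 :=
      congrArg Subtype.val h
    exact Subtype.ext h'
  have hScard : S.card = n := by
    have h1 : S.card = T.attach.card := Finset.card_image_of_injective _ hinjS
    rw [h1, Finset.card_attach, hTcard]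
  have hSpow : ∀ a ∈ S, a ^ n = 1 := by
    intro a ha
    obtain ⟨w, hw, rfl⟩ := Finset.mem_image.mp ha
    have hwr : (w.1 : K) ^ n = 1 := by
      have hw' : w.1 ∈ q.roots := Multiset.mem_toFinset.mp w.2
      exact (hmem w.1).mp hw'
    apply PadicIntBar.coe_injective
    show ((⟨w.1, _⟩ : PadicIntBar p) ^ n).1 = (1 : PadicIntBar p).1
    rw [PadicIntBar.coe_one]
    calc ((⟨w.1, hTint w.1 w.2⟩ : PadicIntBar p) ^ n).1 = (w.1 : K) ^ n := rfl
      _ = 1 := hwr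
  refine ⟨S, by omega, ?_⟩
  intro a ha b hb hab
  have han : a ^ n = 1 := hSpow a ha
  have hbn : b ^ n = 1 := hSpow b hb
  have haU : IsUnit a := by
    refine IsUnit.of_mul_eq_one (a := a) (a ^ (n-1)) ?_
    rw [← pow_succ']
    rw [show n - 1 + 1 = n by omega, han]
  set ω : PadicIntBar p := a ^ (n-1) * b with hω
  have haω : a * ω = b := by
    rw [hω, ← mul_assoc, ← pow_succ', show n - 1 + 1 = n by omega, han, one_mul]
  have hωn : ω ^ n = 1 := by
    rw [hω, mul_pow, ← pow_mul, mul_comm (n-1) n, pow_mul, han, one_pow, one_mul, hbn]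
  have hω1 : ω ≠ 1 := by
    intro h
    rw [h, mul_one] at haω
    exact hab haω
  -- IsUnit (1 - ω)
  have hωK : (ω.1 : K) ^ n = 1 := by
    have h1 : ((ω ^ n : PadicIntBar p)).1 = (ω.1 : K) ^ n := rfl
    rw [← h1, hωn, PadicIntBar.coe_one]
  have hωK1 : (ω.1 : K) ≠ 1 := fun h => hω1 (PadicIntBar.coe_injective (by
    show ω.1 = (1 : PadicIntBar p).1
    rw [PadicIntBar.coe_one, h]))
  obtain ⟨ρ, hρmem, hρ⟩ := one_sub_root_unity_dvd hn0 ω.1 hωK hωK1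
  have hu : IsUnit ((1 : PadicIntBar p) - ω) := by
    have hdvd : ((1 : PadicIntBar p) - ω) ∣ (n : PadicIntBar p) := by
      refine ⟨⟨ρ, hρmem⟩, PadicIntBar.coe_injective ?_⟩
      show ((n : PadicIntBar p)).1 = ((1 - ω) * ⟨ρ, hρmem⟩).1
      rw [PadicIntBar.coe_natCast]
      show (n : K) = ((1 : PadicIntBar p) - ω).1 * ρ
      have : ((1 : PadicIntBar p) - ω).1 = 1 - ω.1 := rfl
      rw [this, hρ]
    exact isUnit_of_dvd_unit hdvd (natCast_isUnit hpn)
  have heq : a * (1 - ω) = a - b := by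
    rw [mul_sub, mul_one, haω]
  rw [← heq]
  exact haU.mul hu

end PadicIntBar

lemma exists_unit_eval (Q : Polynomial (PadicIntBar p)) (hQ : ∃ j, IsUnit (Q.coeff j)) :
    ∃ m : PadicIntBar p, IsUnit (Q.eval m) := by
  classical
  set 𝔪 := IsLocalRing.maximalIdeal (PadicIntBar p) with h𝔪
  letI : Field (PadicIntBar p ⧸ 𝔪) := Ideal.Quotient.field 𝔪
  have hinf : Infinite (PadicIntBar p ⧸ 𝔪) := by
    by_contra hfin
    rw [not_infinite_iff_finite] at hfin
    haveI := hfin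
    haveI := Fintype.ofFinite (PadicIntBar p ⧸ 𝔪)
    obtain ⟨S, hcard, hdiff⟩ := PadicIntBar.exists_pairwise_unit_diff (p := p)
      (Fintype.card (PadicIntBar p ⧸ 𝔪) + 1)
    have hinj : Set.InjOn (Ideal.Quotient.mk 𝔪) S := by
      intro a ha b hb hab
      by_contra hne
      have hu := hdiff a ha b hb hne
      have hmem : a - b ∈ 𝔪 := Ideal.Quotient.eq.mp hab
      exact (mem_nonunits_iff.mp ((IsLocalRing.mem_maximalIdeal _).mp hmem)) hu
    have hcard2 : Fintype.card (PadicIntBar p ⧸ 𝔪) + 1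
        ≤ (S.image (Ideal.Quotient.mk 𝔪)).card := by
      rw [Finset.card_image_of_injOn hinj]; exact hcard
    have h3 := Finset.card_le_univ (S.image (Ideal.Quotient.mk 𝔪))
    omega
  obtain ⟨j, hj⟩ := hQ
  set Qbar := Q.map (Ideal.Quotient.mk 𝔪) with hQb
  have hQbar : Qbar ≠ 0 := by
    intro h
    have h1 : Qbar.coeff j = 0 := by rw [h]; simp
    rw [hQb, coeff_map, Ideal.Quotient.eq_zero_iff_mem] at h1
    exact (mem_nonunits_iff.mp ((IsLocalRing.mem_maximalIdeal _).mp h1)) hj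
  have hex : ∃ y, Qbar.eval y ≠ 0 := by
    by_contra h
    push_neg at h
    exact hQbar (Polynomial.zero_of_eval_zero _ h)
  obtain ⟨y, hy⟩ := hex
  obtain ⟨m, rfl⟩ := Ideal.Quotient.mk_surjective y
  refine ⟨m, ?_⟩
  have heval : Ideal.Quotient.mk 𝔪 (Q.eval m) = Qbar.eval (Ideal.Quotient.mk 𝔪 m) := by
    rw [hQb, Polynomial.eval_map, Polynomial.eval₂_at_apply]
  by_contra hu
  have hmem : Q.eval m ∈ 𝔪 := (IsLocalRing.mem_maximalIdeal _).mpr (mem_nonunits_iff.mpr hu)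
  rw [← Ideal.Quotient.eq_zero_iff_mem, heval] at hmem
  exact hy hmem

lemma list_exists_dvd_all (l : List (PadicIntBar p)) (hl : l ≠ []) :
    ∃ c ∈ l, ∀ x ∈ l, c ∣ x := by
  induction l with
  | nil => exact absurd rfl hl
  | cons a t ih =>
    by_cases ht : t = []
    · subst ht
      refine ⟨a, List.mem_cons_self, ?_⟩
      intro x hx
      rw [List.mem_singleton] at hx
      rw [hx]
    · obtain ⟨c, hcl, hc⟩ := ih ht
      rcases PadicIntBar.dvd_total a c with h | h
      · refine ⟨a, List.mem_cons_self, ?_⟩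
        intro x hx
        rcases List.mem_cons.mp hx with rfl | hx
        · exact dvd_rfl
        · exact h.trans (hc x hx)
      · refine ⟨c, List.mem_cons_of_mem a hcl, ?_⟩
        intro x hx
        rcases List.mem_cons.mp hx with rfl | hx
        · exact h
        · exact hc x hx

theorem padic_integral_closure_copschinzel (p : ℕ) [Fact p.Prime] :
    -- (i) no prime elements at all, and there are nonzero non-units
    -- (hence nonzero non-units not divisible by any prime element)
    ((∀ q : PadicIntBar p, ¬ Prime q) ∧
      ∃ a : PadicIntBar p, a ≠ 0 ∧ ¬ IsUnit a ∧
        ∀ q : PadicIntBar p, Prime q → ¬ q ∣ a) ∧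
    -- (ii) CopSch(1,1)
    (∀ (ℓ : ℕ), 2 ≤ ℓ → ∀ P : Fin ℓ → Polynomial (PadicIntBar p),
      (∀ i, P i ≠ 0) →
      (∀ d : Polynomial (FractionRing (PadicIntBar p)),
        (∀ i, d ∣ (P i).map (algebraMap (PadicIntBar p) (FractionRing (PadicIntBar p)))) →
        IsUnit d) →
      (∀ a : PadicIntBar p,
        (∀ m : PadicIntBar p, ∀ i, a ∣ (P i).eval m) → IsUnit a) →
      ∃ m : PadicIntBar p, ∀ d : PadicIntBar p,
        (∀ i, d ∣ (P i).eval m) → IsUnit d) := by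
  constructor
  · exact ⟨PadicIntBar.not_prime, (p : PadicIntBar p), PadicIntBar.p_ne_zero,
      PadicIntBar.p_not_unit, fun q hq => absurd hq (PadicIntBar.not_prime q)⟩
  · intro ℓ hℓ P hP0 _hcop h3
    classical
    set l : List (PadicIntBar p) := (List.finRange ℓ).flatMap
      (fun i => (List.range ((P i).natDegree + 1)).map fun j => (P i).coeff j) with hl
    have hlne : l ≠ [] := by
      have hi0 : (⟨0, by omega⟩ : Fin ℓ) ∈ List.finRange ℓ := List.mem_finRange _
      have hmem : (P ⟨0, by omega⟩).coeff 0 ∈ l := by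
        rw [hl]
        exact List.mem_flatMap.mpr ⟨_, hi0,
          List.mem_map.mpr ⟨0, List.mem_range.mpr (by omega), rfl⟩⟩
      exact List.ne_nil_of_mem hmem
    obtain ⟨c, hcl, hcall⟩ := list_exists_dvd_all l hlne
    have hcdvd : ∀ i j, c ∣ (P i).coeff j := by
      intro i j
      by_cases hj : j ≤ (P i).natDegree
      · refine hcall _ ?_
        rw [hl]
        exact List.mem_flatMap.mpr ⟨i, List.mem_finRange i,
          List.mem_map.mpr ⟨j, List.mem_range.mpr (by omega), rfl⟩⟩
      · rw [coeff_eq_zero_of_natDegree_lt (by omega)]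
        exact dvd_zero c
    have hcev : ∀ m : PadicIntBar p, ∀ i, c ∣ (P i).eval m := by
      intro m i
      rw [eval_eq_sum_range]
      exact Finset.dvd_sum fun j _ => Dvd.dvd.mul_right (hcdvd i j) _
    have hcu : IsUnit c := h3 c hcev
    have hcoeff : ∃ i j, c = (P i).coeff j := by
      rw [hl] at hcl
      obtain ⟨i, hi, hc2⟩ := List.mem_flatMap.mp hcl
      obtain ⟨j, hj, hc3⟩ := List.mem_map.mp hc2
      exact ⟨i, j, hc3.symm⟩
    obtain ⟨i0, j0, hc0⟩ := hcoeff
    obtain ⟨m, hm⟩ := exists_unit_eval (P i0) ⟨j0, hc0 ▸ hcu⟩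
    exact ⟨m, fun d hd => isUnit_of_dvd_unit (hd i0) hm⟩
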